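/- Let G be a finite abelian group of order n, k an integer with exp(G) | k and k < n, and x ∈ G. If both (G \ {0}, B_k^{x,*}) and (G, B_k^x) are (t-1)-designs with t ≥ 2, then (G, B_k^x) is a t-design. -/

import Mathlib

open Finset

/-- The family of `k`-element subsets of `G` whose elements sum to `x`. -/
def sumBlocks (G : Type) [AddCommGroup G] [Fintype G] [DecidableEq G]
    (k : ℕ) (x : G) : Finset (Finset G) :=
  Finset.univ.filter (fun T => T.card = k ∧ T.sum id = x)

/-- The family of `k`-element subsets of `G \ {0}` whose elements sum to `x`. -/
def sumBlocksStar (G : Type) [AddCommGroup G] [Fintype G] [DecidableEq G]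
    (k : ℕ) (x : G) : Finset (Finset G) :=
  Finset.univ.filter (fun T => T.card = k ∧ T.sum id = x ∧ (0 : G) ∉ T)

/-- `(G, B_k^x)` is a 1-design: the block family is nonempty and every
point of `G` lies in the same number of blocks. -/
def isOneDesign (G : Type) [AddCommGroup G] [Fintype G] [DecidableEq G]
    (k : ℕ) (x : G) : Prop :=
  sumBlocks G k x ≠ ∅ ∧ ∃ r : ℕ, ∀ y : G,
    ((sumBlocks G k x).filter (fun B => y ∈ B)).card = r

/-- `e(x) = max {d : d ∣ exp(G), x ∈ dG}`. -/
noncomputable def eMax (G : Type) [AddCommGroup G] [Fintype G] [DecidableEq G] (x : G) : ℕ :=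
  Nat.findGreatest (fun d => d ∣ AddMonoid.exponent G ∧ ∃ y : G, d • y = x)
    (AddMonoid.exponent G)

/-- `(G, B_k^x)` is a `t`-design. -/
def isDesign (G : Type) [AddCommGroup G] [Fintype G] [DecidableEq G]
    (t k : ℕ) (x : G) : Prop :=
  sumBlocks G k x ≠ ∅ ∧ ∃ lam : ℕ, ∀ S : Finset G, S.card = t →
    ((sumBlocks G k x).filter (fun B => S ⊆ B)).card = lam

/-- `(G \ {0}, B_k^{x,*})` is a `t`-design. -/
def isDesignStar (G : Type) [AddCommGroup G] [Fintype G] [DecidableEq G]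
    (t k : ℕ) (x : G) : Prop :=
  sumBlocksStar G k x ≠ ∅ ∧ ∃ lam : ℕ, ∀ S : Finset G, S.card = t → (0 : G) ∉ S →
    ((sumBlocksStar G k x).filter (fun B => S ⊆ B)).card = lam

lemma aux_nsmul (G : Type) [AddCommGroup G] {k : ℕ} (h : AddMonoid.exponent G ∣ k) (c : G) :
    k • c = 0 := by
  obtain ⟨m, rfl⟩ := h
  rw [mul_nsmul, AddMonoid.exponent_nsmul_eq_zero, smul_zero]

lemma aux_mem_translate (G : Type) [AddCommGroup G] [Fintype G] [DecidableEq G]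
    {k : ℕ} (hdvd : AddMonoid.exponent G ∣ k) {x : G} (c : G) {B : Finset G}
    (hB : B ∈ sumBlocks G k x) : B.image (· + c) ∈ sumBlocks G k x := by
  simp only [sumBlocks, mem_filter, mem_univ, true_and] at hB ⊢
  refine ⟨by rw [card_image_of_injective _ (add_left_injective c), hB.1], ?_⟩
  rw [Finset.sum_image (by intro a _ b _ h; exact add_left_injective c h)]
  simp only [id_eq]
  rw [Finset.sum_add_distrib, Finset.sum_const, hB.1]
  have : B.sum id = x := hB.2
  simp only [id_eq] at this
  rw [this, aux_nsmul G hdvd c, add_zero]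

lemma aux_translate_count (G : Type) [AddCommGroup G] [Fintype G] [DecidableEq G]
    {k : ℕ} (hdvd : AddMonoid.exponent G ∣ k) (x : G) (c : G) (S : Finset G) :
    ((sumBlocks G k x).filter (fun B => S ⊆ B)).card
      = ((sumBlocks G k x).filter (fun B => S.image (· + c) ⊆ B)).card := by
  apply Finset.card_bij (fun B _ => B.image (· + c))
  · intro B hB
    rw [mem_filter] at hB ⊢
    exact ⟨aux_mem_translate G hdvd c hB.1, Finset.image_subset_image hB.2⟩
  · intro B₁ h₁ B₂ h₂ h
    have := Finset.image_injective (f := fun a : G => a + c) (add_left_injective c)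
    exact this h
  · intro B' hB'
    rw [mem_filter] at hB'
    refine ⟨B'.image (· + (-c)), ?_, ?_⟩
    · rw [mem_filter]
      constructor
      · exact aux_mem_translate G hdvd (-c) hB'.1
      · have : S = (S.image (· + c)).image (· + (-c)) := by
          rw [Finset.image_image]; simp
        rw [this]
        exact Finset.image_subset_image hB'.2
    · rw [Finset.image_image]; simp


theorem stmt13 (G : Type) [AddCommGroup G] [Fintype G] [DecidableEq G]
    (k : ℕ) (hdvd : AddMonoid.exponent G ∣ k) (hkn : k < Fintype.card G)
    (x : G) (t : ℕ) (ht : 2 ≤ t)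
    (hstar : isDesignStar G (t - 1) k x) (hfull : isDesign G (t - 1) k x) :
    isDesign G t k x := by
  obtain ⟨hne, lam, hlam⟩ := hfull
  obtain ⟨-, lamS, hlamS⟩ := hstar
  refine ⟨hne, lam - lamS, ?_⟩
  intro S hS
  -- S is nonempty
  have hSne : S.Nonempty := by
    rw [← Finset.card_pos, hS]; omega
  obtain ⟨s, hs⟩ := hSne
  set S' := S.image (· + (-s)) with hS'def
  have hcount : ((sumBlocks G k x).filter (fun B => S ⊆ B)).card
      = ((sumBlocks G k x).filter (fun B => S' ⊆ B)).card :=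
    aux_translate_count G hdvd x (-s) S
  have h0S' : (0 : G) ∈ S' := mem_image.2 ⟨s, hs, by simp⟩
  set T := S'.erase 0 with hTdef
  have h0T : (0 : G) ∉ T := notMem_erase _ _
  have hS'card : S'.card = t := by
    rw [hS'def, card_image_of_injective _ (add_left_injective (-s)), hS]
  have hTcard : T.card = t - 1 := by rw [hTdef, card_erase_of_mem h0S', hS'card]
  have hins : insert (0 : G) T = S' := insert_erase h0S'
  -- split the count over T
  have hsplit : ((sumBlocks G k x).filter (fun B => T ⊆ B)).card
      = ((sumBlocks G k x).filter (fun B => S' ⊆ B)).card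
        + ((sumBlocksStar G k x).filter (fun B => T ⊆ B)).card := by
    have e1 : (sumBlocks G k x).filter (fun B => T ⊆ B)
        = ((sumBlocks G k x).filter (fun B => T ⊆ B)).filter (fun B => (0:G) ∈ B)
          ∪ ((sumBlocks G k x).filter (fun B => T ⊆ B)).filter (fun B => (0:G) ∉ B) :=
      (Finset.filter_union_filter_not_eq _ _).symm
    have e2 : ((sumBlocks G k x).filter (fun B => T ⊆ B)).filter (fun B => (0:G) ∈ B)
        = (sumBlocks G k x).filter (fun B => S' ⊆ B) := by
      ext B
      simp only [mem_filter, ← hins, insert_subset_iff]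
      tauto
    have e3 : ((sumBlocks G k x).filter (fun B => T ⊆ B)).filter (fun B => (0:G) ∉ B)
        = (sumBlocksStar G k x).filter (fun B => T ⊆ B) := by
      ext B
      simp only [mem_filter, sumBlocks, sumBlocksStar, mem_filter, mem_univ, true_and]
      tauto
    rw [e1, card_union_of_disjoint, e2, e3]
    exact disjoint_filter_filter_not _ _ _
  have hT1 := hlam T hTcard
  have hT2 := hlamS T hTcard h0T
  rw [hT1, hT2] at hsplit
  rw [hcount]
  omega
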